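/- For a finite graph G with at least one edge, the vertex cover LP integrality gap ρ(G) equals 1 (i.e., P(G) has integral optimal solutions for every nonnegative cost) if and only if G is bipartite. -/

import Mathlib

set_option linter.unusedSectionVars false
set_option maxHeartbeats 1000000


open Finset

def IsVC {V : Type*} (G : SimpleGraph V) (S : Set V) : Prop :=
  ∀ ⦃u v⦄, G.Adj u v → u ∈ S ∨ v ∈ S

def IsIndep {V : Type*} (G : SimpleGraph V) (S : Set V) : Prop :=
  ∀ ⦃u⦄, u ∈ S → ∀ ⦃v⦄, v ∈ S → ¬ G.Adj u v

def lpPoly {V : Type*} (G : SimpleGraph V) : Set (V → ℝ) :=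
  {x | (∀ v, 0 ≤ x v) ∧ ∀ ⦃u v⦄, G.Adj u v → 1 ≤ x u + x v}

/-- Optimal value of the fractional coloring LP of the subgraph of `G` induced on `s`:
weights on independent sets contained in `s` covering every vertex of `s`. -/
noncomputable def fracChromOn {V : Type*} [Fintype V] [DecidableEq V]
    (G : SimpleGraph V) (s : Set V) : ℝ :=
  sInf {t | ∃ y : Finset V → ℝ, (∀ U, 0 ≤ y U) ∧
    (∀ U, y U ≠ 0 → IsIndep G ↑U ∧ ↑U ⊆ s) ∧
    (∀ v ∈ s, 1 ≤ ∑ U : Finset V, if v ∈ U then y U else 0) ∧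
    t = ∑ U : Finset V, y U}

/-- Fractional chromatic number of `G`. -/
noncomputable def fracChrom {V : Type*} [Fintype V] [DecidableEq V]
    (G : SimpleGraph V) : ℝ :=
  fracChromOn G Set.univ

/-- Optimal value of the vertex cover LP relaxation under cost `c`. -/
noncomputable def lpVal {V : Type*} [Fintype V] (G : SimpleGraph V) (c : V → ℝ) : ℝ :=
  sInf {t | ∃ x ∈ lpPoly G, t = ∑ v, c v * x v}

/-- Minimum cost of an integral vertex cover under cost `c`. -/
noncomputable def ipVal {V : Type*} [Fintype V] [DecidableEq V]
    (G : SimpleGraph V) (c : V → ℝ) : ℝ :=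
  sInf {t | ∃ S : Finset V, IsVC G ↑S ∧ t = ∑ v ∈ S, c v}

/-- Integrality gap of the vertex cover LP relaxation. -/
noncomputable def gap {V : Type*} [Fintype V] [DecidableEq V] (G : SimpleGraph V) : ℝ :=
  sSup {r | ∃ c : V → ℝ, (∀ v, 0 ≤ c v) ∧ 0 < lpVal G c ∧ r = ipVal G c / lpVal G c}

section Aux
variable {V : Type*} [Fintype V] [DecidableEq V] {G : SimpleGraph V} {c : V → ℝ}

lemma ones_mem_lpPoly : (fun _ : V => (1:ℝ)) ∈ lpPoly G :=
  ⟨fun _ => zero_le_one, fun _ _ _ => by norm_num⟩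

lemma half_mem_lpPoly : (fun _ : V => (1/2:ℝ)) ∈ lpPoly G :=
  ⟨fun _ => by norm_num, fun _ _ _ => by norm_num⟩

lemma lpSet_nonempty : {t | ∃ x ∈ lpPoly G, t = ∑ v, c v * x v}.Nonempty :=
  ⟨_, (fun _ : V => (1:ℝ)), ones_mem_lpPoly, rfl⟩

lemma lpSet_bddBelow (hc : ∀ v, 0 ≤ c v) :
    BddBelow {t | ∃ x ∈ lpPoly G, t = ∑ v, c v * x v} := by
  refine ⟨0, fun t ht => ?_⟩
  obtain ⟨x, hx, rfl⟩ := ht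
  exact Finset.sum_nonneg fun v _ => mul_nonneg (hc v) (hx.1 v)

lemma ipSet_nonempty : {t | ∃ S : Finset V, IsVC G ↑S ∧ t = ∑ v ∈ S, c v}.Nonempty :=
  ⟨_, Finset.univ, fun u v _ => Or.inl (by simp), rfl⟩

lemma ipSet_bddBelow (hc : ∀ v, 0 ≤ c v) :
    BddBelow {t | ∃ S : Finset V, IsVC G ↑S ∧ t = ∑ v ∈ S, c v} := by
  refine ⟨0, fun t ht => ?_⟩
  obtain ⟨S, _, rfl⟩ := ht
  exact Finset.sum_nonneg fun v _ => hc v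

lemma ipVal_nonneg (hc : ∀ v, 0 ≤ c v) : 0 ≤ ipVal G c :=
  le_csInf ipSet_nonempty (fun t ht => by
    obtain ⟨S, _, rfl⟩ := ht; exact Finset.sum_nonneg fun v _ => hc v)

lemma ipVal_le_cost (hc : ∀ v, 0 ≤ c v) {S : Finset V} (hS : IsVC G ↑S) :
    ipVal G c ≤ ∑ v ∈ S, c v :=
  csInf_le (ipSet_bddBelow hc) ⟨S, hS, rfl⟩

lemma lpVal_le_sum (hc : ∀ v, 0 ≤ c v) {x : V → ℝ} (hx : x ∈ lpPoly G) :
    lpVal G c ≤ ∑ v, c v * x v :=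
  csInf_le (lpSet_bddBelow hc) ⟨x, hx, rfl⟩

/-- the indicator of a vertex cover is LP feasible -/
lemma indicator_mem_lpPoly {S : Finset V} (hS : IsVC G ↑S) :
    (fun v => if v ∈ S then (1:ℝ) else 0) ∈ lpPoly G := by
  constructor
  · intro v; dsimp only; split <;> norm_num
  · intro u v huv
    rcases hS huv with h | h <;> simp only [Finset.mem_coe] at h
    · have h1 : (0:ℝ) ≤ if v ∈ S then (1:ℝ) else 0 := by split <;> norm_num
      simp [h]; linarith
    · have h1 : (0:ℝ) ≤ if u ∈ S then (1:ℝ) else 0 := by split <;> norm_num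
      simp [h]; linarith

lemma lpVal_le_ipVal (hc : ∀ v, 0 ≤ c v) : lpVal G c ≤ ipVal G c := by
  refine le_csInf ipSet_nonempty ?_
  rintro t ⟨S, hS, rfl⟩
  have := lpVal_le_sum hc (indicator_mem_lpPoly hS)
  calc lpVal G c ≤ ∑ v, c v * (if v ∈ S then (1:ℝ) else 0) := this
    _ = ∑ v ∈ S, c v := by
        simp [mul_ite, Finset.sum_ite_mem]

lemma ipVal_le_two_mul_lpVal (hc : ∀ v, 0 ≤ c v) : ipVal G c ≤ 2 * lpVal G c := by
  have h : ∀ t ∈ {t | ∃ x ∈ lpPoly G, t = ∑ v, c v * x v}, ipVal G c / 2 ≤ t := by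
    rintro t ⟨x, hx, rfl⟩
    classical
    set S : Finset V := Finset.univ.filter (fun v => (1:ℝ)/2 ≤ x v) with hSdef
    have hS : IsVC G ↑S := by
      intro u v huv
      by_cases h1 : (1:ℝ)/2 ≤ x u
      · exact Or.inl (by simp only [hSdef, Finset.coe_filter, Set.mem_setOf_eq, Finset.mem_univ, true_and]; exact h1)
      · refine Or.inr (by simp only [hSdef, Finset.coe_filter, Set.mem_setOf_eq,
          Finset.mem_univ, true_and]; linarith [hx.2 huv])
    have hcost : ∑ v ∈ S, c v ≤ 2 * ∑ v, c v * x v := by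
      rw [Finset.mul_sum]
      calc ∑ v ∈ S, c v ≤ ∑ v ∈ S, 2 * (c v * x v) := by
            refine Finset.sum_le_sum fun v hv => ?_
            have : (1:ℝ)/2 ≤ x v := by simpa [hSdef] using hv
            nlinarith [hc v]
        _ ≤ ∑ v, 2 * (c v * x v) := by
            refine Finset.sum_le_sum_of_subset_of_nonneg (Finset.subset_univ _) ?_
            intro v _ _
            have := mul_nonneg (hc v) (hx.1 v); linarith
    have := ipVal_le_cost hc hS
    linarith
  have := le_csInf (lpSet_nonempty (G := G) (c := c)) h
  rw [lpVal] at *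
  linarith


lemma enum_exists (T : Finset ℝ) (h0 : (0:ℝ) ∈ T) (h1 : (1:ℝ) ∈ T)
    (hbd : ∀ a ∈ T, 0 ≤ a ∧ a ≤ 1) :
    ∃ (m : ℕ) (g : ℕ → ℝ), 1 ≤ m ∧ g 0 = 0 ∧ g m = 1 ∧ (∀ i, g i ∈ T) ∧
      (∀ i j, i ≤ j → g i ≤ g j) ∧ (∀ i j, i < j → j ≤ m → g i < g j) ∧
      (∀ a ∈ T, ∃ j ≤ m, g j = a) := by
  classical
  set k := T.card with hk
  have hk2 : 2 ≤ k := by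
    have hsub : ({0, 1} : Finset ℝ) ⊆ T := by
      intro a ha; rcases Finset.mem_insert.1 ha with rfl | ha
      · exact h0
      · rcases Finset.mem_singleton.1 ha with rfl; exact h1
    have := Finset.card_le_card hsub
    rwa [Finset.card_pair (by norm_num)] at this
  have hkpos : 0 < k := by omega
  set σ := T.orderIsoOfFin hk.symm with hσ
  have hlt : ∀ i : ℕ, min i (k-1) < k := fun i =>
    lt_of_le_of_lt (min_le_right _ _) (Nat.sub_lt hkpos one_pos)
  set g : ℕ → ℝ := fun i => (σ ⟨min i (k-1), hlt i⟩ : ℝ) with hg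
  have hmem : ∀ i, g i ∈ T := fun i => (σ _).2
  have hmono : ∀ i j, i ≤ j → g i ≤ g j := by
    intro i j hij
    exact σ.monotone (by simp [Fin.mk_le_mk]; omega)
  have hstrict : ∀ i j, i < j → j ≤ k - 1 → g i < g j := by
    intro i j hij hj
    have : (⟨min i (k-1), hlt i⟩ : Fin k) < ⟨min j (k-1), hlt j⟩ := by
      simp [Fin.mk_lt_mk]; omega
    exact σ.strictMono this
  have hsurj : ∀ a ∈ T, ∃ j ≤ k - 1, g j = a := by
    intro a ha
    obtain ⟨j, hj⟩ := σ.surjective ⟨a, ha⟩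
    refine ⟨j.1, Nat.le_pred_of_lt j.2, ?_⟩
    have : (⟨min j.1 (k-1), hlt j.1⟩ : Fin k) = j := by
      ext; simp; omega
    rw [hg]; simp only [this, hj]
  have hg0 : g 0 = 0 := by
    obtain ⟨j, hj, hja⟩ := hsurj 0 h0
    have h1' : g 0 ≤ g j := hmono 0 j (Nat.zero_le _)
    have h2' : 0 ≤ g 0 := (hbd _ (hmem 0)).1
    rw [hja] at h1'; linarith
  have hgm : g (k-1) = 1 := by
    obtain ⟨j, hj, hja⟩ := hsurj 1 h1
    have h1' : g j ≤ g (k-1) := hmono j (k-1) hj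
    have h2' : g (k-1) ≤ 1 := (hbd _ (hmem (k-1))).2
    rw [hja] at h1'; linarith
  exact ⟨k - 1, g, by omega, hg0, hgm, hmem, hmono, hstrict, hsurj⟩

lemma bipartite_ipVal_le_lpVal (hc : ∀ v, 0 ≤ c v) {A : Set V}
    (hA : IsIndep G A) (hAc : IsIndep G Aᶜ) : ipVal G c ≤ lpVal G c := by
  classical
  refine le_csInf lpSet_nonempty ?_
  rintro t ⟨x, hx, rfl⟩
  set y : V → ℝ := fun v => min (x v) 1 with hy
  have hy0 : ∀ v, 0 ≤ y v := fun v => le_min (hx.1 v) zero_le_one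
  have hy1 : ∀ v, y v ≤ 1 := fun v => min_le_right _ _
  have hyle : ∀ v, y v ≤ x v := fun v => min_le_left _ _
  have hyfeas : ∀ ⦃u v⦄, G.Adj u v → 1 ≤ y u + y v := by
    intro u v huv
    rcases le_or_gt 1 (x u) with h | h
    · have h1 := hy0 v
      have h2 : y u = 1 := min_eq_right h
      linarith
    rcases le_or_gt 1 (x v) with h' | h'
    · have h1 := hy0 u
      have h2 : y v = 1 := min_eq_right h'
      linarith
    · have h2 : y u = x u := min_eq_left h.le
      have h3 : y v = x v := min_eq_left h'.le
      have h4 := hx.2 huv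
      linarith
  set T : Finset ℝ :=
    insert 0 (insert 1 (Finset.univ.image fun v => if v ∈ A then y v else 1 - y v)) with hT
  have hTbd : ∀ a ∈ T, 0 ≤ a ∧ a ≤ 1 := by
    intro a ha
    rw [hT, Finset.mem_insert, Finset.mem_insert] at ha
    rcases ha with rfl | rfl | ha
    · norm_num
    · norm_num
    · obtain ⟨v, _, rfl⟩ := Finset.mem_image.1 ha
      have := hy0 v; have := hy1 v
      split <;> constructor <;> linarith
  have hyT : ∀ v, v ∈ A → y v ∈ T := by
    intro v hv
    rw [hT, Finset.mem_insert, Finset.mem_insert]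
    refine Or.inr (Or.inr (Finset.mem_image.2 ⟨v, Finset.mem_univ v, by simp [hv]⟩))
  have hyT' : ∀ v, v ∉ A → 1 - y v ∈ T := by
    intro v hv
    rw [hT, Finset.mem_insert, Finset.mem_insert]
    refine Or.inr (Or.inr (Finset.mem_image.2 ⟨v, Finset.mem_univ v, by simp [hv]⟩))
  obtain ⟨m, g, hm1, hg0, hgm, hmem, hmono, hstrict, hsurj⟩ :=
    enum_exists T (by simp [hT]) (by simp [hT]) hTbd
  set S : ℕ → Finset V :=
    fun i => Finset.univ.filter (fun v => if v ∈ A then g (i+1) ≤ y v else 1 - y v ≤ g i) with hS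
  have hmemS : ∀ i v, v ∈ S i ↔ (if v ∈ A then g (i+1) ≤ y v else 1 - y v ≤ g i) := by
    intro i v; simp [hS]
  have hkey : ∀ a ∈ T, ∀ i, a < g (i+1) → a ≤ g i := by
    intro a ha i hlt
    obtain ⟨j, hj, rfl⟩ := hsurj a ha
    by_cases hij : j ≤ i
    · exact hmono _ _ hij
    · exact absurd (hmono _ _ (by omega : i+1 ≤ j)) (not_le.2 hlt)
  have hVC : ∀ i, IsVC G ↑(S i) := by
    intro i u v huv
    have main : ∀ p q, G.Adj p q → p ∈ A → q ∉ A → p ∈ S i ∨ q ∈ S i := by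
      intro p q hpq hp hq
      by_cases h : g (i+1) ≤ y p
      · left; rw [hmemS]; simp only [hp, if_true]; exact h
      · right; rw [hmemS, if_neg hq]
        have h2 : y p ≤ g i := hkey _ (hyT p hp) i (not_le.1 h)
        have h3 := hyfeas hpq
        linarith
    by_cases hu : u ∈ A
    · by_cases hv : v ∈ A
      · exact absurd huv (hA hu hv)
      · exact (main u v huv hu hv).imp Finset.mem_coe.2 Finset.mem_coe.2
    · by_cases hv : v ∈ A
      · exact ((main v u huv.symm hv hu).imp Finset.mem_coe.2 Finset.mem_coe.2).symm
      · exact absurd huv (hAc hu hv)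
  set w : ℕ → ℝ := fun i => g (i+1) - g i with hw
  have hw0 : ∀ i, 0 ≤ w i := fun i => sub_nonneg.2 (hmono i (i+1) (Nat.le_succ i))
  have hwsum : ∑ i ∈ Finset.range m, w i = 1 := by
    rw [hw]
    rw [Finset.sum_range_sub g m, hg0, hgm]; ring
  have hpoint : ∀ v, ∑ i ∈ Finset.range m, w i * (if v ∈ S i then 1 else 0) = y v := by
    intro v
    by_cases hv : v ∈ A
    · obtain ⟨j, hj, hja⟩ := hsurj (y v) (hyT v hv)
      have hcond : ∀ i ∈ Finset.range m,
          (w i * (if v ∈ S i then 1 else 0)) = (if i ∈ Finset.range j then w i else 0) := by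
        intro i hi
        rw [Finset.mem_range] at hi
        have hiff : v ∈ S i ↔ i < j := by
          rw [hmemS]; simp only [hv, if_true]
          constructor
          · intro h
            by_contra hcon
            push_neg at hcon
            have h1 := hstrict i (i+1) (Nat.lt_succ_self i) (by omega)
            have h2 := hmono j i (by omega)
            rw [hja] at h2
            linarith
          · intro h
            have h2 := hmono (i+1) j (by omega)
            rw [hja] at h2
            linarith
        by_cases h : i < j <;> simp [hiff, h, Finset.mem_range]
      rw [Finset.sum_congr rfl hcond, Finset.sum_ite_mem,
        Finset.inter_eq_right.2 (Finset.range_subset_range.2 hj),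
        Finset.sum_range_sub g j, hg0, hja]
      ring
    · obtain ⟨j, hj, hja⟩ := hsurj (1 - y v) (hyT' v hv)
      have hcond : ∀ i ∈ Finset.range m,
          (w i * (if v ∈ S i then 1 else 0)) = w i - (if i ∈ Finset.range j then w i else 0) := by
        intro i hi
        rw [Finset.mem_range] at hi
        have hiff : v ∈ S i ↔ j ≤ i := by
          rw [hmemS, if_neg hv]
          constructor
          · intro h
            by_contra hcon
            push_neg at hcon
            have h1 := hstrict i j hcon hj
            rw [hja] at h1
            linarith
          · intro h
            have h2 := hmono j i h
            rw [hja] at h2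
            linarith
        by_cases h : j ≤ i
        · simp [hiff, h, Finset.mem_range, Nat.not_lt.2 h]
        · simp [hiff, h, Finset.mem_range, Nat.lt_of_not_le h]
      rw [Finset.sum_congr rfl hcond, Finset.sum_sub_distrib, hwsum, Finset.sum_ite_mem,
        Finset.inter_eq_right.2 (Finset.range_subset_range.2 hj),
        Finset.sum_range_sub g j, hg0, hja]
      ring
  have hstep : ipVal G c ≤ ∑ i ∈ Finset.range m, w i * ∑ v ∈ S i, c v := by
    calc ipVal G c = ∑ i ∈ Finset.range m, w i * ipVal G c := by
          rw [← Finset.sum_mul, hwsum, one_mul]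
      _ ≤ _ := Finset.sum_le_sum fun i _ =>
          mul_le_mul_of_nonneg_left (ipVal_le_cost hc (hVC i)) (hw0 i)
  have hswap : ∑ i ∈ Finset.range m, w i * ∑ v ∈ S i, c v = ∑ v, c v * y v := by
    have h1 : ∀ i, ∑ v ∈ S i, c v = ∑ v, c v * (if v ∈ S i then 1 else 0) := by
      intro i; rw [eq_comm]; simp [mul_ite, Finset.sum_ite_mem]
    calc ∑ i ∈ Finset.range m, w i * ∑ v ∈ S i, c v
        = ∑ i ∈ Finset.range m, ∑ v, c v * (w i * (if v ∈ S i then 1 else 0)) := by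
          refine Finset.sum_congr rfl fun i _ => ?_
          rw [h1, Finset.mul_sum]
          exact Finset.sum_congr rfl fun v _ => by ring
      _ = ∑ v, ∑ i ∈ Finset.range m, c v * (w i * (if v ∈ S i then 1 else 0)) :=
          Finset.sum_comm
      _ = ∑ v, c v * y v := by
          refine Finset.sum_congr rfl fun v _ => ?_
          rw [← Finset.mul_sum, hpoint]
  have hfinal : ∑ v, c v * y v ≤ ∑ v, c v * x v :=
    Finset.sum_le_sum fun v _ => mul_le_mul_of_nonneg_left (hyle v) (hc v)
  rw [hswap] at hstep
  linarith

lemma exists_odd_closed (hnb : ¬ ∃ A : Set V, IsIndep G A ∧ IsIndep G Aᶜ) :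
    ∃ n, Odd n ∧ ∃ f : ℕ → V, (∀ i < n, G.Adj (f i) (f (i+1))) ∧ f n = f 0 := by
  by_contra hno
  apply hnb
  set root : V → V := fun v => (G.connectedComponentMk v).out with hroot
  have hreach : ∀ v, G.Reachable v (root v) := by
    intro v
    apply SimpleGraph.ConnectedComponent.exact
    rw [hroot]
    exact ((G.connectedComponentMk v).out_eq).symm
  have hnoodd : ∀ (v : V) (p : G.Walk v v), ¬ Odd p.length := by
    intro v p hodd
    exact hno ⟨p.length, hodd, p.getVert, fun i hi => p.adj_getVert_succ hi,
      by rw [p.getVert_length, p.getVert_zero]⟩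
  have hrooteq : ∀ ⦃u v⦄, G.Adj u v → root u = root v := by
    intro u v h
    rw [hroot]; simp only
    rw [SimpleGraph.ConnectedComponent.sound h.reachable]
  set A : Set V := {v | ∃ p : G.Walk v (root v), Odd p.length} with hAdef
  have closedOdd : ∀ ⦃u v⦄, G.Adj u v → ∀ (p : G.Walk u (root u)) (q : G.Walk v (root v)),
      ¬ (p.length % 2 = q.length % 2) := by
    intro u v huv p q hpar
    refine hnoodd _
      (p.reverse.append (SimpleGraph.Walk.cons huv (q.copy rfl (hrooteq huv).symm))) ?_
    rw [SimpleGraph.Walk.length_append, SimpleGraph.Walk.length_reverse,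
      SimpleGraph.Walk.length_cons, SimpleGraph.Walk.length_copy, Nat.odd_iff]
    omega
  refine ⟨A, ?_, ?_⟩
  · intro u hu v hv huv
    obtain ⟨p, hp⟩ := hu
    obtain ⟨q, hq⟩ := hv
    rw [Nat.odd_iff] at hp hq
    exact closedOdd huv p q (by omega)
  · intro u hu v hv huv
    obtain ⟨p⟩ := hreach u
    obtain ⟨q⟩ := hreach v
    have hp : ¬ Odd p.length := fun hh => hu ⟨p, hh⟩
    have hq : ¬ Odd q.length := fun hh => hv ⟨q, hh⟩
    rw [Nat.odd_iff] at hp hq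
    exact closedOdd huv p q (by omega)

lemma exists_odd_cycle_fn (h : ∃ n, Odd n ∧ ∃ f : ℕ → V,
      (∀ i < n, G.Adj (f i) (f (i+1))) ∧ f n = f 0) :
    ∃ (n : ℕ) (f : ℕ → V), Odd n ∧ 3 ≤ n ∧ (∀ i < n, G.Adj (f i) (f (i+1))) ∧ f n = f 0 ∧
      (∀ i < n, ∀ j < n, f i = f j → i = j) := by
  classical
  have hQex : ∃ n, Odd n ∧ ∃ f : ℕ → V,
      (∀ i < n, G.Adj (f i) (f (i+1))) ∧ f n = f 0 := h
  set n := Nat.find hQex with hn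
  have hspec : Odd n ∧ ∃ f : ℕ → V, (∀ i < n, G.Adj (f i) (f (i+1))) ∧ f n = f 0 :=
    Nat.find_spec hQex
  obtain ⟨hodd, f, hadj, hclosed⟩ := hspec
  have hmin : ∀ m, m < n → ¬ (Odd m ∧ ∃ g : ℕ → V,
      (∀ i < m, G.Adj (g i) (g (i+1))) ∧ g m = g 0) :=
    fun m hm => Nat.find_min hQex hm
  have hn1 : n ≠ 1 := by
    intro h1
    have h2 := hadj 0 (by omega)
    rw [h1] at hclosed
    rw [hclosed] at h2
    exact G.irrefl h2
  have hn3 : 3 ≤ n := by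
    rcases hodd with ⟨k, hk⟩
    omega
  refine ⟨n, f, hodd, hn3, hadj, hclosed, ?_⟩
  intro i hi j hj hij
  by_contra hne
  wlog hlt : i < j generalizing i j
  · exact this j hj i hi hij.symm (Ne.symm hne) (by omega)
  have ha : ∃ g : ℕ → V, (∀ k < j - i, G.Adj (g k) (g (k+1))) ∧ g (j-i) = g 0 := by
    refine ⟨fun k => f (i + k), fun k hk => ?_, ?_⟩
    · show G.Adj (f (i + k)) (f (i + (k+1)))
      have h1 : i + (k+1) = (i + k) + 1 := by omega
      rw [h1]
      exact hadj (i+k) (by omega)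
    · show f (i + (j - i)) = f (i + 0)
      have h1 : i + (j - i) = j := by omega
      have h2 : i + 0 = i := by omega
      rw [h1, h2]
      exact hij.symm
  have hb : ∃ g : ℕ → V, (∀ k < n - j + i, G.Adj (g k) (g (k+1))) ∧ g (n-j+i) = g 0 := by
    refine ⟨fun k => if k ≤ n - j then f (j + k) else f (k - (n - j)), fun k hk => ?_, ?_⟩
    · show G.Adj (if k ≤ n - j then f (j + k) else f (k - (n - j)))
        (if k + 1 ≤ n - j then f (j + (k+1)) else f (k + 1 - (n - j)))
      by_cases hc1 : k < n - j
      · rw [if_pos (by omega : k ≤ n - j), if_pos (by omega : k + 1 ≤ n - j)]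
        have h1 : j + (k+1) = (j + k) + 1 := by omega
        rw [h1]
        exact hadj (j+k) (by omega)
      · have hk' : k - (n - j) < i := by omega
        have hval : (if k ≤ n - j then f (j + k) else f (k - (n - j))) = f (k - (n-j)) := by
          by_cases hc2 : k ≤ n - j
          · rw [if_pos hc2]
            have h2 : j + k = n := by omega
            have h3 : k - (n - j) = 0 := by omega
            rw [h2, h3, hclosed]
          · rw [if_neg hc2]
        rw [hval, if_neg (by omega : ¬ k + 1 ≤ n - j)]
        have h1 : k + 1 - (n - j) = (k - (n-j)) + 1 := by omega
        rw [h1]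
        exact hadj (k - (n-j)) (by omega)
    · show (if n - j + i ≤ n - j then f (j + (n - j + i)) else f (n - j + i - (n - j)))
        = (if 0 ≤ n - j then f (j + 0) else f (0 - (n - j)))
      rw [if_pos (Nat.zero_le _)]
      by_cases hc : i = 0
      · rw [if_pos (by omega : n - j + i ≤ n - j)]
        have h1 : j + (n - j + i) = n := by omega
        have h2 : j + 0 = j := by omega
        rw [h1, h2, hclosed]
        rw [hc] at hij
        exact hij
      · rw [if_neg (by omega : ¬ n - j + i ≤ n - j)]
        have h1 : n - j + i - (n - j) = i := by omega
        have h2 : j + 0 = j := by omega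
        rw [h1, h2, hij]
  have hsplit : Odd (j - i) ∨ Odd (n - j + i) := by
    rw [Nat.odd_iff] at hodd ⊢
    rw [Nat.odd_iff]
    omega
  rcases hsplit with hcase | hcase
  · exact hmin (j - i) (by omega) ⟨hcase, ha⟩
  · exact hmin (n - j + i) (by omega) ⟨hcase, hb⟩

lemma nonbip_big_ratio (hnb : ¬ ∃ A : Set V, IsIndep G A ∧ IsIndep G Aᶜ) :
    ∃ r ∈ {r | ∃ c : V → ℝ, (∀ v, 0 ≤ c v) ∧ 0 < lpVal G c ∧ r = ipVal G c / lpVal G c},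
      1 < r := by
  classical
  obtain ⟨n, f, hodd, hn3, hadj, hclosed, hinj⟩ := exists_odd_cycle_fn (exists_odd_closed hnb)
  set W : Finset V := (Finset.range n).image f with hW
  set cc : V → ℝ := fun v => if v ∈ W then 1 else 0 with hcc
  have hcc0 : ∀ v, 0 ≤ cc v := by
    intro v; rw [hcc]; dsimp only; split <;> norm_num
  have hinj' : ∀ i ∈ Finset.range n, ∀ j ∈ Finset.range n, f i = f j → i = j := by
    intro i hi j hj
    exact hinj i (Finset.mem_range.1 hi) j (Finset.mem_range.1 hj)
  have hsumid : ∀ x : V → ℝ, ∑ v, cc v * x v = ∑ i ∈ Finset.range n, x (f i) := by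
    intro x
    have h1 : ∑ v, cc v * x v = ∑ v ∈ W, x v := by
      rw [hcc]
      simp only [ite_mul, one_mul, zero_mul]
      rw [Finset.sum_ite_mem, Finset.univ_inter]
    rw [h1, hW, Finset.sum_image hinj']
  have hshift : ∀ x : V → ℝ, ∑ i ∈ Finset.range n, x (f (i+1)) = ∑ i ∈ Finset.range n, x (f i) := by
    intro x
    have h1 := Finset.sum_range_succ' (fun i => x (f i)) n
    have h2 := Finset.sum_range_succ (fun i => x (f i)) n
    simp only [hclosed] at h2
    rw [h1] at h2
    linarith
  have hlp_ge : (n : ℝ)/2 ≤ lpVal G cc := by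
    refine le_csInf lpSet_nonempty ?_
    rintro t ⟨x, hx, rfl⟩
    rw [hsumid x]
    have h1 : ∀ i ∈ Finset.range n, (1:ℝ) ≤ x (f i) + x (f (i+1)) :=
      fun i hi => hx.2 (hadj i (Finset.mem_range.1 hi))
    have h2 : (n:ℝ) ≤ ∑ i ∈ Finset.range n, (x (f i) + x (f (i+1))) := by
      calc (n:ℝ) = ∑ _i ∈ Finset.range n, (1:ℝ) := by simp
        _ ≤ _ := Finset.sum_le_sum h1
    rw [Finset.sum_add_distrib, hshift x] at h2
    linarith
  have hlp_le : lpVal G cc ≤ (n:ℝ)/2 := by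
    have h1 := lpVal_le_sum hcc0 (half_mem_lpPoly (G := G))
    rw [hsumid (fun _ => 1/2)] at h1
    simp at h1; linarith
  have hip_ge : ((n : ℝ)+1)/2 ≤ ipVal G cc := by
    refine le_csInf ipSet_nonempty ?_
    rintro t ⟨S, hS, rfl⟩
    set M : Finset ℕ := (Finset.range n).filter (fun i => f i ∈ S) with hM
    have hcount : (M.card : ℝ) ≤ ∑ v ∈ S, cc v := by
      have h1 : ∑ v ∈ S, cc v = ((S ∩ W).card : ℝ) := by
        rw [hcc]
        rw [Finset.sum_ite_mem]
        simp
      have h2 : M.image f ⊆ S ∩ W := by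
        intro v hv
        obtain ⟨i, hi, rfl⟩ := Finset.mem_image.1 hv
        rw [hM, Finset.mem_filter] at hi
        exact Finset.mem_inter.2 ⟨hi.2, Finset.mem_image.2 ⟨i, hi.1, rfl⟩⟩
      have h3 : (M.image f).card = M.card :=
        Finset.card_image_of_injOn (fun i hi j hj =>
          hinj' i (Finset.mem_filter.1 hi).1 j (Finset.mem_filter.1 hj).1)
      have h4 := Finset.card_le_card h2
      rw [h3] at h4
      rw [h1]
      exact_mod_cast h4
    have h2n : n + 1 ≤ 2 * M.card := by
      have hcard : M.card = ∑ i ∈ Finset.range n, (if f i ∈ S then 1 else 0) := by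
        rw [hM, Finset.card_filter]
      have hshNat : ∑ i ∈ Finset.range n, (if f (i+1) ∈ S then 1 else 0)
          = ∑ i ∈ Finset.range n, (if f i ∈ S then 1 else 0) := by
        have h1 := Finset.sum_range_succ' (fun i => if f i ∈ S then 1 else 0) n
        have h2 := Finset.sum_range_succ (fun i => if f i ∈ S then 1 else 0) n
        simp only [hclosed] at h2
        rw [h1] at h2
        omega
      have hterm : ∀ i ∈ Finset.range n,
          1 ≤ (if f i ∈ S then 1 else 0) + (if f (i+1) ∈ S then 1 else 0) := by
        intro i hi
        rcases hS (hadj i (Finset.mem_range.1 hi)) with h | h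
        · rw [if_pos (Finset.mem_coe.1 h)]; omega
        · rw [if_pos (Finset.mem_coe.1 h)]; omega
      have hsum : n ≤ ∑ i ∈ Finset.range n,
          ((if f i ∈ S then 1 else 0) + (if f (i+1) ∈ S then 1 else 0)) := by
        calc n = ∑ _i ∈ Finset.range n, 1 := by simp
          _ ≤ _ := Finset.sum_le_sum hterm
      rw [Finset.sum_add_distrib, hshNat, ← hcard] at hsum
      rw [Nat.odd_iff] at hodd
      omega
    have : ((n:ℝ) + 1) ≤ 2 * M.card := by exact_mod_cast h2n
    linarith
  have hlppos : 0 < lpVal G cc := by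
    have : (0:ℝ) < (n:ℝ)/2 := by
      have : (3:ℝ) ≤ n := by exact_mod_cast hn3
      linarith
    linarith
  refine ⟨ipVal G cc / lpVal G cc, ⟨cc, hcc0, hlppos, rfl⟩, ?_⟩
  rw [lt_div_iff₀ hlppos, one_mul]
  have : (n:ℝ)/2 < ((n:ℝ)+1)/2 := by linarith
  linarith

end Aux

/-- The vertex cover LP integrality gap equals `1` iff the graph is bipartite. -/
theorem stmt11 {V : Type*} [Fintype V] [DecidableEq V] (G : SimpleGraph V)
    (hE : ∃ u v, G.Adj u v) :
    gap G = 1 ↔ ∃ A : Set V, IsIndep G A ∧ IsIndep G Aᶜ := by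
  classical
  constructor
  · intro hgap
    by_contra hnb
    obtain ⟨r, hr, hr1⟩ := nonbip_big_ratio hnb
    have hbdd : BddAbove {r | ∃ c : V → ℝ,
        (∀ v, 0 ≤ c v) ∧ 0 < lpVal G c ∧ r = ipVal G c / lpVal G c} := by
      refine ⟨2, ?_⟩
      rintro s ⟨c, hc, hpos, rfl⟩
      show ipVal G c / lpVal G c ≤ 2
      rw [div_le_iff₀ hpos]
      have h5 := ipVal_le_two_mul_lpVal (G := G) hc
      linarith
    have hle := le_csSup hbdd hr
    rw [show sSup {r | ∃ c : V → ℝ,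
        (∀ v, 0 ≤ c v) ∧ 0 < lpVal G c ∧ r = ipVal G c / lpVal G c} = gap G from rfl] at hle
    rw [hgap] at hle
    linarith
  · rintro ⟨A, hA, hAc⟩
    obtain ⟨u, v, huv⟩ := hE
    have hone : (1:ℝ) ≤ lpVal G (fun _ => 1) := by
      refine le_csInf lpSet_nonempty ?_
      rintro t ⟨x, hx, rfl⟩
      have h2 : x u + x v ≤ ∑ w, (1:ℝ) * x w := by
        simp only [one_mul]
        have h3 := Finset.sum_le_sum_of_subset_of_nonneg
          (Finset.subset_univ ({u, v} : Finset V)) (fun w _ _ => hx.1 w)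
        rwa [Finset.sum_pair (G.ne_of_adj huv)] at h3
      have h4 := hx.2 huv
      linarith
    have hmemR : (1:ℝ) ∈ {r | ∃ c : V → ℝ,
        (∀ v, 0 ≤ c v) ∧ 0 < lpVal G c ∧ r = ipVal G c / lpVal G c} := by
      refine ⟨fun _ => 1, fun _ => zero_le_one, by linarith, ?_⟩
      have hle := lpVal_le_ipVal (G := G) (c := fun _ => 1) (fun _ => zero_le_one)
      have hge := bipartite_ipVal_le_lpVal (c := fun _ => 1) (fun _ => zero_le_one) hA hAc
      rw [le_antisymm hge hle, div_self (by linarith)]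
    have hsub1 : {r | ∃ c : V → ℝ,
        (∀ v, 0 ≤ c v) ∧ 0 < lpVal G c ∧ r = ipVal G c / lpVal G c} ⊆ {1} := by
      rintro s ⟨c, hc, hpos, rfl⟩
      have hle := lpVal_le_ipVal (G := G) hc
      have hge := bipartite_ipVal_le_lpVal hc hA hAc
      rw [Set.mem_singleton_iff, le_antisymm hge hle, div_self (ne_of_gt hpos)]
    have hset : {r | ∃ c : V → ℝ,
        (∀ v, 0 ≤ c v) ∧ 0 < lpVal G c ∧ r = ipVal G c / lpVal G c} = {1} :=
      Set.Subset.antisymm hsub1 (by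
        intro s hs
        rw [Set.mem_singleton_iff] at hs
        rw [hs]
        exact hmemR)
    show sSup {r | ∃ c : V → ℝ,
        (∀ v, 0 ≤ c v) ∧ 0 < lpVal G c ∧ r = ipVal G c / lpVal G c} = 1
    rw [hset, csSup_singleton]
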